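/- Let M be a real m_A × m_B matrix, |ψ⟩ a unit vector in ℂ² ⊗ ℂ², and A_i = a_i·σ ⊗ 𝟙, B_j = 𝟙 ⊗ (b_j·σᵗ) with unit vectors a_i, b_j ∈ ℝ³. Then Σ_{i,j} M_{ij} ⟨ψ| A_i B_j |ψ⟩ ≤ Σ_{i=1}^{m_A} ‖Σ_{j=1}^{m_B} M_{ij} b_j‖, where the norm on the right is the Euclidean norm in ℝ³. -/

import Mathlib

open Matrix
open Kronecker
open scoped InnerProductSpace

noncomputable def pauliX : Matrix (Fin 2) (Fin 2) ℂ := !![0, 1; 1, 0]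
noncomputable def pauliY : Matrix (Fin 2) (Fin 2) ℂ := !![0, -Complex.I; Complex.I, 0]
noncomputable def pauliZ : Matrix (Fin 2) (Fin 2) ℂ := !![1, 0; 0, -1]

/-- `v ⬝ σ` for `v ∈ ℝ³`. -/
noncomputable def dotPauli (v : EuclideanSpace ℝ (Fin 3)) : Matrix (Fin 2) (Fin 2) ℂ :=
  (v 0 : ℂ) • pauliX + (v 1 : ℂ) • pauliY + (v 2 : ℂ) • pauliZ


lemma dotPauli_conjT (v : EuclideanSpace ℝ (Fin 3)) : (dotPauli v)ᴴ = dotPauli v := by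
  ext i j
  fin_cases i <;> fin_cases j <;>
    simp [dotPauli, pauliX, pauliY, pauliZ, conjTranspose_apply, Complex.ext_iff]

lemma dotPauli_transpose_conjT (v : EuclideanSpace ℝ (Fin 3)) :
    ((dotPauli v)ᵀ)ᴴ = (dotPauli v)ᵀ := by
  ext i j
  have := congrFun (congrFun (dotPauli_conjT v) j) i
  simpa [conjTranspose_apply, transpose_apply] using this

lemma norm_sq_eq' (v : EuclideanSpace ℝ (Fin 3)) :
    ‖v‖ ^ 2 = v 0 ^ 2 + v 1 ^ 2 + v 2 ^ 2 := by
  rw [← real_inner_self_eq_norm_sq, PiLp.inner_apply]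
  simp [Fin.sum_univ_three, sq]

lemma dotPauli_mul_self (v : EuclideanSpace ℝ (Fin 3)) :
    dotPauli v * dotPauli v = ((‖v‖ ^ 2 : ℝ) : ℂ) • 1 := by
  rw [norm_sq_eq']
  ext i j
  fin_cases i <;> fin_cases j <;>
    simp [dotPauli, pauliX, pauliY, pauliZ, mul_apply, Fin.sum_univ_two,
      Matrix.one_apply, Complex.ext_iff, ← Complex.ofReal_pow] <;> ring_nf <;> trivial

lemma euclidean_sum_apply {m : ℕ} (c : Fin m → ℝ) (b : Fin m → EuclideanSpace ℝ (Fin 3))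
    (k : Fin 3) : (∑ j, c j • b j) k = ∑ j, c j * b j k := by
  induction' (Finset.univ : Finset (Fin m)) using Finset.induction_on with j s hj ih
  · rfl
  · rw [Finset.sum_insert hj, Finset.sum_insert hj, ← ih]
    rfl

lemma dotPauli_sum {m : ℕ} (c : Fin m → ℝ) (b : Fin m → EuclideanSpace ℝ (Fin 3)) :
    dotPauli (∑ j, c j • b j) = ∑ j, (c j : ℂ) • dotPauli (b j) := by
  have h : ∀ k : Fin 3, (((∑ j, c j • b j) k : ℝ) : ℂ) = ∑ j, (c j : ℂ) * ((b j k : ℝ) : ℂ) := by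
    intro k; rw [euclidean_sum_apply]; push_cast; rfl
  ext k l
  simp only [dotPauli, Matrix.add_apply, Matrix.smul_apply, Matrix.sum_apply, smul_eq_mul,
    h 0, h 1, h 2, Finset.sum_mul, ← Finset.sum_add_distrib]
  exact Finset.sum_congr rfl fun j _ => by ring

lemma kron_conjT (A B : Matrix (Fin 2) (Fin 2) ℂ) : (A ⊗ₖ B)ᴴ = Aᴴ ⊗ₖ Bᴴ := by
  ext ⟨k1, k2⟩ ⟨l1, l2⟩
  simp [conjTranspose_apply, Matrix.kroneckerMap_apply]

lemma one_kron_sum {m : ℕ} (c : Fin m → ℂ) (f : Fin m → Matrix (Fin 2) (Fin 2) ℂ) :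
    (1 : Matrix (Fin 2) (Fin 2) ℂ) ⊗ₖ (∑ j, c j • f j) =
      ∑ j, c j • ((1 : Matrix (Fin 2) (Fin 2) ℂ) ⊗ₖ f j) := by
  ext ⟨k1, k2⟩ ⟨l1, l2⟩
  simp only [Matrix.kroneckerMap_apply, Matrix.sum_apply, Matrix.smul_apply, smul_eq_mul,
    Finset.mul_sum]
  exact Finset.sum_congr rfl fun j _ => by ring

lemma toEL_mul {n : Type*} [Fintype n] [DecidableEq n] (A B : Matrix n n ℂ)
    (x : EuclideanSpace ℂ n) :
    Matrix.toEuclideanLin (A * B) x = Matrix.toEuclideanLin A (Matrix.toEuclideanLin B x) := by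
  simp [Matrix.toEuclideanLin_apply, Matrix.mulVec_mulVec]

lemma inner_toEL_mul {n : Type*} [Fintype n] [DecidableEq n] (A B : Matrix n n ℂ)
    (hA : Aᴴ = A) (ψ : EuclideanSpace ℂ n) :
    ⟪ψ, Matrix.toEuclideanLin (A * B) ψ⟫_ℂ =
      ⟪Matrix.toEuclideanLin A ψ, Matrix.toEuclideanLin B ψ⟫_ℂ := by
  rw [toEL_mul]
  conv_rhs => rw [← hA, Matrix.toEuclideanLin_conjTranspose_eq_adjoint]
  rw [LinearMap.adjoint_inner_left]

lemma norm_toEL_sq {n : Type*} [Fintype n] [DecidableEq n] (A : Matrix n n ℂ)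
    (ψ : EuclideanSpace ℂ n) :
    (‖Matrix.toEuclideanLin A ψ‖ : ℂ) ^ 2 = ⟪ψ, Matrix.toEuclideanLin (Aᴴ * A) ψ⟫_ℂ := by
  rw [toEL_mul, Matrix.toEuclideanLin_conjTranspose_eq_adjoint, LinearMap.adjoint_inner_right,
    inner_self_eq_norm_sq_to_K]
  norm_cast

lemma norm_toEL_of_smul_one {n : Type*} [Fintype n] [DecidableEq n] (A : Matrix n n ℂ)
    (c : ℝ) (hA : Aᴴ * A = (c : ℂ) • 1)
    (ψ : EuclideanSpace ℂ n) (hψ : ‖ψ‖ = 1) :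
    ‖Matrix.toEuclideanLin A ψ‖ = Real.sqrt c := by
  have h := norm_toEL_sq A ψ
  rw [hA, _root_.map_smul] at h
  have h1 : Matrix.toEuclideanLin (1 : Matrix n n ℂ) ψ = ψ := by
    simp [Matrix.toEuclideanLin_apply]
  rw [LinearMap.smul_apply, h1, inner_smul_right, inner_self_eq_norm_sq_to_K, hψ] at h
  have h2 : (‖Matrix.toEuclideanLin A ψ‖ : ℝ) ^ 2 = c := by
    have := congrArg Complex.re h
    simpa [← Complex.ofReal_pow] using this
  rw [← h2, Real.sqrt_sq (norm_nonneg _)]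

theorem stmt18 (mA mB : ℕ) (M : Matrix (Fin mA) (Fin mB) ℝ)
    (ψ : EuclideanSpace ℂ (Fin 2 × Fin 2)) (hψ : ‖ψ‖ = 1)
    (a : Fin mA → EuclideanSpace ℝ (Fin 3)) (b : Fin mB → EuclideanSpace ℝ (Fin 3))
    (ha : ∀ i, ‖a i‖ = 1) (hb : ∀ j, ‖b j‖ = 1) :
    (∑ i, ∑ j, M i j *
        (⟪ψ, Matrix.toEuclideanLin
            ((dotPauli (a i) ⊗ₖ (1 : Matrix (Fin 2) (Fin 2) ℂ)) *
             ((1 : Matrix (Fin 2) (Fin 2) ℂ) ⊗ₖ (dotPauli (b j))ᵀ)) ψ⟫_ℂ).re) ≤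
      ∑ i, ‖∑ j, M i j • b j‖ := by
  apply Finset.sum_le_sum
  intro i _
  set v : EuclideanSpace ℝ (Fin 3) := ∑ j, M i j • b j with hv
  set A : Matrix (Fin 2 × Fin 2) (Fin 2 × Fin 2) ℂ := dotPauli (a i) ⊗ₖ 1 with hA
  set V : Matrix (Fin 2 × Fin 2) (Fin 2 × Fin 2) ℂ :=
    (1 : Matrix (Fin 2) (Fin 2) ℂ) ⊗ₖ (dotPauli v)ᵀ with hV
  have hVsum : V = ∑ j, (M i j : ℂ) • ((1 : Matrix (Fin 2) (Fin 2) ℂ) ⊗ₖ (dotPauli (b j))ᵀ) := by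
    rw [hV, hv, dotPauli_sum, transpose_sum]
    simp only [transpose_smul]
    exact one_kron_sum _ _
  have step1 : (∑ j, M i j *
      (⟪ψ, Matrix.toEuclideanLin
          (A * ((1 : Matrix (Fin 2) (Fin 2) ℂ) ⊗ₖ (dotPauli (b j))ᵀ)) ψ⟫_ℂ).re)
      = (⟪ψ, Matrix.toEuclideanLin (A * V) ψ⟫_ℂ).re := by
    rw [hVsum, Finset.mul_sum]
    simp only [mul_smul_comm, map_sum, _root_.map_smul, LinearMap.sum_apply,
      LinearMap.smul_apply, inner_sum, inner_smul_right, Complex.re_sum]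
    exact Finset.sum_congr rfl fun j _ => by
      rw [Complex.re_ofReal_mul]
  rw [step1]
  have hAherm : Aᴴ = A := by
    rw [hA, kron_conjT, dotPauli_conjT, conjTranspose_one]
  have hnA : ‖Matrix.toEuclideanLin A ψ‖ = 1 := by
    have hA1 : Aᴴ * A = ((1 : ℝ) : ℂ) • 1 := by
      rw [hAherm, hA, ← Matrix.mul_kronecker_mul, dotPauli_mul_self, ha i, mul_one,
        Matrix.smul_kronecker, Matrix.one_kronecker_one]
      norm_num
    rw [norm_toEL_of_smul_one A 1 hA1 ψ hψ, Real.sqrt_one]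
  have hnV : ‖Matrix.toEuclideanLin V ψ‖ = ‖v‖ := by
    have hVherm : Vᴴ = V := by
      rw [hV, kron_conjT, dotPauli_transpose_conjT, conjTranspose_one]
    have hV1 : Vᴴ * V = ((‖v‖ ^ 2 : ℝ) : ℂ) • 1 := by
      rw [hVherm, hV, ← Matrix.mul_kronecker_mul, one_mul, ← transpose_mul, dotPauli_mul_self,
        transpose_smul, transpose_one, Matrix.kronecker_smul, Matrix.one_kronecker_one]
    rw [norm_toEL_of_smul_one V (‖v‖ ^ 2) hV1 ψ hψ, Real.sqrt_sq (norm_nonneg _)]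
  calc (⟪ψ, Matrix.toEuclideanLin (A * V) ψ⟫_ℂ).re
      = (⟪Matrix.toEuclideanLin A ψ, Matrix.toEuclideanLin V ψ⟫_ℂ).re := by
        rw [inner_toEL_mul A V hAherm]
    _ ≤ ‖Matrix.toEuclideanLin A ψ‖ * ‖Matrix.toEuclideanLin V ψ‖ := by
        simpa using re_inner_le_norm (𝕜 := ℂ) (Matrix.toEuclideanLin A ψ) (Matrix.toEuclideanLin V ψ)
    _ = ‖v‖ := by rw [hnA, hnV, one_mul]
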